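/- For the constant continued fraction word n = (n,n,n,…) with n ≥ 2, the limit lim_{k→∞} (k·log n)/(log q_k(n)) exists and equals -log(n)/log(-n/2 + √(n²/4 + 1)), and this value is strictly less than 1. -/

import Mathlib

open Filter Topology

/-- For the constant continued fraction word `(n, n, n, …)` with `n ≥ 2`, where the
denominators satisfy `q₀ = 1`, `q₁ = n`, `q_{k+2} = n q_{k+1} + q_k`, the limit
`lim_k (k log n)/(log q_k)` exists and equals
`-log n / log (-n/2 + √(n²/4 + 1))`, and this value is strictly less than `1`. -/

lemma gauss_aux_pos (n : ℕ) (q : ℕ → ℕ) (h0 : q 0 = 1) (h1 : q 1 = n)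
    (hn : 2 ≤ n) (hrec : ∀ k, q (k + 2) = n * q (k + 1) + q k) :
    ∀ k, 1 ≤ q k := by
  intro k
  induction k using Nat.strong_induction_on with
  | _ k ih =>
    match k with
    | 0 => simp [h0]
    | 1 => rw [h1]; omega
    | (m+2) =>
      have i1 := ih m (by omega)
      have i2 := ih (m+1) (by omega)
      rw [hrec]; nlinarith

lemma gauss_aux_upper (n : ℕ) (q : ℕ → ℕ) (α : ℝ) (h0 : q 0 = 1) (h1 : q 1 = n)
    (hrec : ∀ k, q (k + 2) = n * q (k + 1) + q k)
    (hα2 : α ^ 2 = (n:ℝ) * α + 1) (hnα : (n:ℝ) < α) (hα0 : 0 < α) :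
    ∀ k, (q k : ℝ) ≤ α ^ k := by
  intro k
  induction k using Nat.strong_induction_on with
  | _ k ih =>
    match k with
    | 0 => simp [h0]
    | 1 => simpa [h1] using hnα.le
    | (m+2) =>
      have i1 := ih (m+1) (by omega)
      have i2 := ih m (by omega)
      have hpow : (0:ℝ) ≤ α ^ m := by positivity
      have e1 : α ^ (m+2) = α ^ m * α ^ 2 := by ring
      have e2 : α ^ (m+1) = α ^ m * α := by ring
      rw [hrec]
      push_cast
      nlinarith [(Nat.cast_nonneg (q m) : (0:ℝ) ≤ (q m : ℝ)), (Nat.cast_nonneg (q (m+1)) : (0:ℝ) ≤ (q (m+1) : ℝ))]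

lemma gauss_aux_lower (n : ℕ) (q : ℕ → ℕ) (α : ℝ) (h0 : q 0 = 1) (h1 : q 1 = n)
    (hrec : ∀ k, q (k + 2) = n * q (k + 1) + q k) (h2n : (2:ℝ) ≤ (n:ℝ))
    (hα2 : α ^ 2 = (n:ℝ) * α + 1) (hαlt : α < (n:ℝ) + 1) (hα0 : 0 < α) :
    ∀ k, α ^ k ≤ (q (k+1) : ℝ) := by
  intro k
  induction k using Nat.strong_induction_on with
  | _ k ih =>
    match k with
    | 0 =>
      have : (1:ℝ) ≤ (n:ℝ) := by linarith
      simpa [h1] using this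
    | 1 =>
      have hq2v : ((q 2 : ℕ) : ℝ) = (n:ℝ)*n+1 := by
        rw [hrec 0, h0, h1]; push_cast; ring
      show α ^ 1 ≤ ((q 2 : ℕ) : ℝ)
      rw [pow_one, hq2v]
      nlinarith
    | (m+2) =>
      have i1 := ih (m+1) (by omega)
      have i2 := ih m (by omega)
      have hpow : (0:ℝ) ≤ α ^ m := by positivity
      have e1 : α ^ (m+2) = α ^ m * α ^ 2 := by ring
      have e2 : α ^ (m+1) = α ^ m * α := by ring
      rw [hrec (m+1)]
      push_cast
      nlinarith

theorem gauss_constant_word_limit (n : ℕ) (hn : 2 ≤ n) (q : ℕ → ℕ)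
    (h0 : q 0 = 1) (h1 : q 1 = n) (hrec : ∀ k, q (k + 2) = n * q (k + 1) + q k) :
    Tendsto (fun k : ℕ => ((k : ℝ) * Real.log n) / Real.log (q k)) atTop
      (nhds (-Real.log n / Real.log (-(n : ℝ) / 2 + Real.sqrt ((n : ℝ) ^ 2 / 4 + 1)))) ∧
    -Real.log n / Real.log (-(n : ℝ) / 2 + Real.sqrt ((n : ℝ) ^ 2 / 4 + 1)) < 1 := by
  have h2n : (2:ℝ) ≤ (n:ℝ) := by exact_mod_cast hn
  obtain ⟨s, hs_def⟩ : ∃ s : ℝ, s = Real.sqrt ((n : ℝ) ^ 2 / 4 + 1) := ⟨_, rfl⟩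
  rw [← hs_def]
  obtain ⟨α, hα_def⟩ : ∃ α : ℝ, α = (n:ℝ)/2 + s := ⟨_, rfl⟩
  have hs2 : s ^ 2 = (n:ℝ)^2/4 + 1 := by rw [hs_def]; exact Real.sq_sqrt (by positivity)
  have hs0 : 0 ≤ s := hs_def ▸ Real.sqrt_nonneg _
  have hsn : (n:ℝ)/2 < s := by nlinarith
  have hnα : (n:ℝ) < α := by rw [hα_def]; linarith
  have hα1 : (1:ℝ) < α := by linarith
  have hα0 : (0:ℝ) < α := by linarith
  have hα2 : α^2 = (n:ℝ)*α + 1 := by rw [hα_def]; nlinarith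
  have hβ : -(n:ℝ)/2 + s = α⁻¹ := by
    have hmul : (-(n:ℝ)/2 + s) * α = 1 := by rw [hα_def]; nlinarith
    exact eq_inv_of_mul_eq_one_left hmul
  have hlogβ : Real.log (-(n:ℝ)/2 + s) = -Real.log α := by rw [hβ, Real.log_inv]
  have hL : -Real.log n / Real.log (-(n:ℝ)/2 + s) = Real.log n / Real.log α := by
    rw [hlogβ, div_neg, neg_div, neg_neg]
  have hlogα : 0 < Real.log α := Real.log_pos hα1
  have hlogn : 0 < Real.log n := Real.log_pos (by exact_mod_cast lt_of_lt_of_le one_lt_two h2n)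
  -- positivity of q
  have hq1 : ∀ k, 1 ≤ q k := gauss_aux_pos n q h0 h1 hn hrec
  have hαlt : α < (n:ℝ) + 1 := by
    have hslt : s < (n:ℝ)/2 + 1 := by nlinarith
    rw [hα_def]; linarith
  have hq2 : ∀ k, 2 ≤ q (k+1) := by
    intro k
    match k with
    | 0 => show 2 ≤ q 1; rw [h1]; exact hn
    | (m+1) =>
      have := hq1 m
      have := hq1 (m+1)
      rw [hrec]; nlinarith
  -- upper bound q k ≤ α^k
  have A : ∀ k, (q k : ℝ) ≤ α ^ k := gauss_aux_upper n q α h0 h1 hrec hα2 hnα hα0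
  have B : ∀ k, α ^ k ≤ (q (k+1) : ℝ) := gauss_aux_lower n q α h0 h1 hrec h2n hα2 hαlt hα0
  -- squeeze: log q k / k → log α
  have htend : Tendsto (fun k : ℕ => Real.log (q k) / k) atTop (nhds (Real.log α)) := by
    have hlower : Tendsto (fun k : ℕ => (1 - 1/(k:ℝ)) * Real.log α) atTop
        (nhds (Real.log α)) := by
      have h1' : Tendsto (fun k : ℕ => 1 - 1/(k:ℝ)) atTop (nhds (1 - 0)) :=
        tendsto_const_nhds.sub tendsto_one_div_atTop_nhds_zero_nat
      have h2' := h1'.mul_const (Real.log α)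
      simpa using h2'
    refine tendsto_of_tendsto_of_tendsto_of_le_of_le' hlower tendsto_const_nhds ?_ ?_
    · filter_upwards [eventually_ge_atTop 1] with k hk
      have hk0 : (0:ℝ) < (k:ℝ) := by exact_mod_cast hk
      have hB := B (k-1)
      rw [Nat.sub_add_cancel hk] at hB
      have hq0 : (0:ℝ) < (q (k-1) + 1 : ℕ) := by positivity
      have hlog : ((k:ℝ) - 1) * Real.log α ≤ Real.log (q k) := by
        have h1' : Real.log (α ^ (k-1)) ≤ Real.log (q k) := by
          apply Real.log_le_log (by positivity) hB
        rw [Real.log_pow] at h1'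
        have : ((k-1 : ℕ) : ℝ) = (k:ℝ) - 1 := by
          have : (1:ℕ) ≤ k := hk
          push_cast [this]; ring
        rw [this] at h1'
        exact h1'
      have hrw : (1 - 1/(k:ℝ)) * Real.log α = (((k:ℝ)-1) * Real.log α) / k := by
        field_simp
      rw [hrw]
      exact div_le_div_of_nonneg_right hlog hk0.le
    · filter_upwards [eventually_ge_atTop 1] with k hk
      have hk0 : (0:ℝ) < (k:ℝ) := by exact_mod_cast hk
      have hA := A k
      have hq0 : (0:ℝ) < (q k : ℝ) := by exact_mod_cast hq1 k
      have : Real.log (q k) ≤ (k:ℝ) * Real.log α := by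
        have := Real.log_le_log hq0 hA
        rwa [Real.log_pow] at this
      rw [div_le_iff₀ hk0]
      linarith [this]
  -- main limit
  have hf : Tendsto (fun k : ℕ => Real.log n / (Real.log (q k) / k)) atTop
      (nhds (Real.log n / Real.log α)) :=
    tendsto_const_nhds.div htend (ne_of_gt hlogα)
  have heq : (fun k : ℕ => Real.log n / (Real.log (q k) / k)) =ᶠ[atTop]
      (fun k : ℕ => ((k : ℝ) * Real.log n) / Real.log (q k)) := by
    filter_upwards [eventually_ge_atTop 1] with k hk
    have hk0 : (0:ℝ) < (k:ℝ) := by exact_mod_cast hk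
    have hq2' : (1:ℝ) < (q k : ℝ) := by
      have h2 := hq2 (k-1)
      rw [Nat.sub_add_cancel hk] at h2
      exact_mod_cast lt_of_lt_of_le one_lt_two (by exact_mod_cast h2)
    have hlogq : 0 < Real.log (q k) := Real.log_pos hq2'
    field_simp
  constructor
  · rw [hL]
    exact Tendsto.congr' heq hf
  · rw [hL, div_lt_one hlogα]
    exact Real.log_lt_log (by linarith) hnα
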